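/- Every additive subgroup G of ℚ that contains 1 is equal to Q(k) for some sequence k : ℕ → ℕ∞, where Q(k) = { p/q ∈ ℚ : q = ∏_{i=1}^m p_i^{n_i} for some m and exponents n_i with n_i < k_i } and p_i denotes the i-th prime. -/

import Mathlib

/-- For a sequence `k : ℕ → ℕ∞` and `pᵢ` the `i`-th prime, `QSet k` is the set of rationals
expressible as a fraction `p / q` (not necessarily in lowest terms) whose denominator is a
product `q = ∏_{i<m} pᵢ ^ nᵢ` for some `m` and exponents `nᵢ` with `(nᵢ : ℕ∞) < kᵢ`. -/
def QSet (k : ℕ → ℕ∞) : Set ℚ :=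
  {x | ∃ (p : ℤ) (m : ℕ) (n : ℕ → ℕ),
    (∀ i < m, (n i : ℕ∞) < k i) ∧
    x = (p : ℚ) / ∏ i ∈ Finset.range m, (Nat.nth Nat.Prime i : ℚ) ^ n i}

/-- If `1/a, 1/b ∈ G` with `a, b` coprime naturals, then `1/(ab) ∈ G`. -/
lemma inv_coprime_mul_mem {G : AddSubgroup ℚ} {a b : ℕ} (hab : Nat.Coprime a b)
    (ha : ((a : ℚ))⁻¹ ∈ G) (hb : ((b : ℚ))⁻¹ ∈ G) : (((a * b : ℕ) : ℚ))⁻¹ ∈ G := by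
  rcases Nat.eq_zero_or_pos a with rfl | ha0
  · simpa using ha
  rcases Nat.eq_zero_or_pos b with rfl | hb0
  · simpa using hb
  obtain ⟨u, v, huv⟩ := hab.isCoprime
  have ha' : (a : ℚ) ≠ 0 := Nat.cast_ne_zero.mpr ha0.ne'
  have hb' : (b : ℚ) ≠ 0 := Nat.cast_ne_zero.mpr hb0.ne'
  have huv' : (u : ℚ) * a + (v : ℚ) * b = 1 := by exact_mod_cast congrArg (Int.cast : ℤ → ℚ) huv
  have key : (((a * b : ℕ) : ℚ))⁻¹ = u • ((b : ℚ))⁻¹ + v • ((a : ℚ))⁻¹ := by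
    rw [zsmul_eq_mul, zsmul_eq_mul]
    push_cast
    rw [mul_inv, inv_eq_one_div, inv_eq_one_div]
    field_simp
    linear_combination -huv'
  rw [key]
  exact add_mem (zsmul_mem hb u) (zsmul_mem ha v)

/-- If `d ∣ e`, `e ≠ 0` and `1/e ∈ G`, then `1/d ∈ G`. -/
lemma inv_dvd_mem {G : AddSubgroup ℚ} {d e : ℕ} (hde : d ∣ e) (he : e ≠ 0)
    (hG : ((e : ℚ))⁻¹ ∈ G) : ((d : ℚ))⁻¹ ∈ G := by
  obtain ⟨c, rfl⟩ := hde
  have hd : d ≠ 0 := by rintro rfl; simp at he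
  have hc : c ≠ 0 := by rintro rfl; simp at he
  have key : ((d : ℚ))⁻¹ = c • (((d * c : ℕ) : ℚ))⁻¹ := by
    rw [nsmul_eq_mul]
    push_cast
    field_simp
  rw [key]
  exact nsmul_mem hG c

/-- Every positive natural is the product of the first `d+1` primes with exponents given by its
factorization. -/
lemma prod_nth_prime_factorization {d : ℕ} (hd : d ≠ 0) :
    ∏ i ∈ Finset.range (d + 1),
      Nat.nth Nat.Prime i ^ d.factorization (Nat.nth Nat.Prime i) = d := by
  classical
  set T := d.primeFactors.image (Nat.count Nat.Prime) with hT
  have hsub : T ⊆ Finset.range (d + 1) := by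
    intro i hi
    simp only [hT, Finset.mem_image] at hi
    obtain ⟨p, hp, rfl⟩ := hi
    have hpd : p ≤ d := Nat.le_of_dvd (Nat.pos_of_ne_zero hd) (Nat.dvd_of_mem_primeFactors hp)
    exact Finset.mem_range.mpr (Nat.lt_succ_of_le (le_trans (Nat.count_le _) hpd))
  have hext : ∀ i ∈ Finset.range (d + 1), i ∉ T →
      Nat.nth Nat.Prime i ^ d.factorization (Nat.nth Nat.Prime i) = 1 := by
    intro i _ hiT
    have hprime : (Nat.nth Nat.Prime i).Prime := Nat.prime_nth_prime i
    have : Nat.nth Nat.Prime i ∉ d.primeFactors := by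
      intro hmem
      apply hiT
      rw [hT]
      refine Finset.mem_image.mpr ⟨Nat.nth Nat.Prime i, hmem, ?_⟩
      exact Nat.count_nth_of_infinite Nat.infinite_setOf_prime i
    have : d.factorization (Nat.nth Nat.Prime i) = 0 := by
      by_contra h
      exact this (by
        rw [← Nat.support_factorization]
        exact Finsupp.mem_support_iff.mpr h)
    rw [this, pow_zero]
  rw [← Finset.prod_subset hsub hext, hT]
  rw [Finset.prod_image ?hinj]
  case hinj =>
    intro p hp q hq hpq
    have hp' : p.Prime := Nat.prime_of_mem_primeFactors hp
    have hq' : q.Prime := Nat.prime_of_mem_primeFactors hq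
    rw [← Nat.nth_count hp', ← Nat.nth_count hq', hpq]
  have hrw : ∀ p ∈ d.primeFactors,
      Nat.nth Nat.Prime (Nat.count Nat.Prime p) ^
        d.factorization (Nat.nth Nat.Prime (Nat.count Nat.Prime p)) =
      p ^ d.factorization p := by
    intro p hp
    rw [Nat.nth_count (Nat.prime_of_mem_primeFactors hp)]
  rw [Finset.prod_congr rfl hrw]
  have := Nat.factorization_prod_pow_eq_self hd
  rwa [Finsupp.prod, Nat.support_factorization] at this

/-- If each `1/pᵢ^{nᵢ} ∈ G` for `i < m`, then the inverse of their product is in `G`. -/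
lemma inv_prod_nth_mem {G : AddSubgroup ℚ} (h1 : (1 : ℚ) ∈ G) (n : ℕ → ℕ) :
    ∀ m : ℕ, (∀ i < m, (((Nat.nth Nat.Prime i ^ n i : ℕ) : ℚ))⁻¹ ∈ G) →
      (((∏ i ∈ Finset.range m, Nat.nth Nat.Prime i ^ n i : ℕ) : ℚ))⁻¹ ∈ G := by
  intro m
  induction m with
  | zero => intro _; simpa using h1
  | succ m ih =>
    intro h
    rw [Finset.prod_range_succ]
    have hcop : Nat.Coprime (∏ i ∈ Finset.range m, Nat.nth Nat.Prime i ^ n i)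
        (Nat.nth Nat.Prime m ^ n m) := by
      apply Nat.Coprime.prod_left
      intro i hi
      have hi' : i < m := Finset.mem_range.mp hi
      have hne : Nat.nth Nat.Prime i ≠ Nat.nth Nat.Prime m := by
        intro heq
        exact hi'.ne ((Nat.nth_injective Nat.infinite_setOf_prime) heq)
      exact ((Nat.coprime_primes (Nat.prime_nth_prime i)
        (Nat.prime_nth_prime m)).mpr hne).pow _ _
    exact inv_coprime_mul_mem hcop
      (ih fun i hi => h i (hi.trans (Nat.lt_succ_self m)))
      (h m (Nat.lt_succ_self m))

/-- Every additive subgroup of ℚ containing 1 equals  for some . -/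
theorem subgroup_of_rat_eq_qset (G : AddSubgroup ℚ) (h1 : (1 : ℚ) ∈ G) :
    ∃ k : ℕ → ℕ∞, (G : Set ℚ) = QSet k := by
  classical
  -- `S i` is the set of exponents `n` such that `1 / pᵢ ^ n ∈ G`
  set S : ℕ → Set ℕ := fun i => {n | (((Nat.nth Nat.Prime i ^ n : ℕ) : ℚ))⁻¹ ∈ G} with hS
  have hSdown : ∀ i, ∀ {a b : ℕ}, a ≤ b → b ∈ S i → a ∈ S i := by
    intro i a b hab hb
    have hp : (Nat.nth Nat.Prime i).Prime := Nat.prime_nth_prime i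
    exact inv_dvd_mem (pow_dvd_pow _ hab) (pow_ne_zero _ hp.ne_zero) hb
  refine ⟨fun i => ⨆ n ∈ S i, ((n : ℕ∞) + 1), ?_⟩
  have hk : ∀ (i : ℕ) (n : ℕ), ((n : ℕ∞) < ⨆ m ∈ S i, ((m : ℕ∞) + 1)) ↔ n ∈ S i := by
    intro i n
    constructor
    · intro h
      rw [lt_iSup_iff] at h
      obtain ⟨m, hm⟩ := h
      rw [lt_iSup_iff] at hm
      obtain ⟨hmS, hm⟩ := hm
      have h2 : (n : ℕ∞) < ((m + 1 : ℕ) : ℕ∞) := by push_cast; exact hm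
      have hnm : n ≤ m := Nat.lt_succ_iff.mp (Nat.cast_lt.mp h2)
      exact hSdown i hnm hmS
    · intro h
      have hle : ((n : ℕ∞) + 1) ≤ ⨆ m ∈ S i, ((m : ℕ∞) + 1) :=
        le_iSup₂ (f := fun (m : ℕ) (_ : m ∈ S i) => ((m : ℕ∞) + 1)) n h
      refine lt_of_lt_of_le ?_ hle
      have h3 : (n : ℕ∞) < ((n + 1 : ℕ) : ℕ∞) := Nat.cast_lt.mpr (Nat.lt_succ_self n)
      push_cast at h3
      exact h3
  ext x
  simp only [SetLike.mem_coe, QSet, Set.mem_setOf_eq]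
  constructor
  · -- G ⊆ QSet
    intro hx
    have hden0 : x.den ≠ 0 := x.den_nz
    have hdenQ : (x.den : ℚ) ≠ 0 := Nat.cast_ne_zero.mpr hden0
    -- 1 / den ∈ G by Bézout
    have hcop : IsCoprime (x.num) ((x.den : ℤ)) := by
      rw [Int.isCoprime_iff_gcd_eq_one]
      simpa [Int.gcd] using x.reduced
    obtain ⟨u, v, huv⟩ := hcop
    have huv' : (u : ℚ) * x.num + (v : ℚ) * x.den = 1 := by
      exact_mod_cast congrArg (Int.cast : ℤ → ℚ) huv
    have hdinv : ((x.den : ℚ))⁻¹ ∈ G := by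
      have key : ((x.den : ℚ))⁻¹ = u • x + v • (1 : ℚ) := by
        rw [zsmul_eq_mul, zsmul_eq_mul, mul_one, inv_eq_one_div]
        conv_rhs => rw [← Rat.num_div_den x]
        field_simp
        linear_combination -huv'
      rw [key]
      exact add_mem (zsmul_mem hx u) (zsmul_mem h1 v)
    refine ⟨x.num, x.den + 1, fun i => x.den.factorization (Nat.nth Nat.Prime i), ?_, ?_⟩
    · intro i _
      rw [hk]
      exact inv_dvd_mem (Nat.ordProj_dvd _ _) hden0 hdinv
    · have hprod := prod_nth_prime_factorization hden0
      have hcast : (∏ i ∈ Finset.range (x.den + 1), (Nat.nth Nat.Prime i : ℚ) ^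
          x.den.factorization (Nat.nth Nat.Prime i)) = (x.den : ℚ) := by
        rw [← hprod]
        push_cast
        rw [hprod]
      rw [hcast, Rat.num_div_den]
  · -- QSet ⊆ G
    rintro ⟨p, m, n, hn, rfl⟩
    have hmem : ∀ i < m, (((Nat.nth Nat.Prime i ^ n i : ℕ) : ℚ))⁻¹ ∈ G := by
      intro i hi
      exact (hk i (n i)).mp (hn i hi)
    have hinv := inv_prod_nth_mem h1 n m hmem
    have hcast : (∏ i ∈ Finset.range m, (Nat.nth Nat.Prime i : ℚ) ^ n i) =
        (((∏ i ∈ Finset.range m, Nat.nth Nat.Prime i ^ n i : ℕ)) : ℚ) := by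
      push_cast
      rfl
    rw [hcast, div_eq_mul_inv]
    have := zsmul_mem hinv p
    rwa [zsmul_eq_mul] at this
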